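/- For every real-valued continuously differentiable function u on ℝ³ whose support is compact and contained in Ω, one has ∫_{ℝ³} |∂u/∂x₁(x₁,x₂,x₃)|² dx₁dx₂dx₃ ≥ ∫_{ℝ³} f(x₁)|u(x₁,x₂,x₃)|² dx₁dx₂dx₃. (Lemma 3.1 of the paper; this is the key Hardy-type estimate behind the main Berezin-type bound.) -/

import Mathlib

open Real Set Filter MeasureTheory

set_option maxHeartbeats 1600000

lemma alg (c S C G D : ℝ) (hs : 0 < S) :
    c * ((((-S*c)*S - C*(C*c))/S^2) * G^2 + (C/S)*(2*G*D)) + c^2*G^2 ≤ D^2 := by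
  have e : c * ((((-S*c)*S - C*(C*c))/S^2) * G^2 + (C/S)*(2*G*D)) + c^2*G^2
      = D^2 - (D - c*(C/S)*G)^2 := by
    field_simp
    ring
  rw [e]
  nlinarith [sq_nonneg (D - c*(C/S)*G)]

lemma poincare1D {g : ℝ → ℝ} (hg : Differentiable ℝ g) (hg' : Continuous (deriv g))
    {a b : ℝ} (hab : a < b) (ha : g a = 0) (hb : g b = 0) :
    ∫ t in Ioo a b, (π/(b-a))^2 * g t ^ 2 ≤ ∫ t in Ioo a b, (deriv g t)^2 := by
  have hL0 : 0 < b - a := by linarith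
  set c := π / (b-a) with hc
  have hc0 : 0 < c := div_pos pi_pos hL0
  have hcL : c * (b-a) = π := by rw [hc, div_mul_cancel₀ _ hL0.ne']
  obtain ⟨M, hM⟩ := (isCompact_Icc (a := a) (b := b)).exists_bound_of_continuousOn hg'.continuousOn
  have hM0 : 0 ≤ M := le_trans (norm_nonneg _) (hM a ⟨le_refl a, le_of_lt hab⟩)
  have hsin_pos : ∀ x ∈ Ioo a b, 0 < Real.sin (c*(x-a)) := by
    intro x hx
    apply Real.sin_pos_of_pos_of_lt_pi
    · exact mul_pos hc0 (by linarith [hx.1])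
    · rw [← hcL]
      exact (mul_lt_mul_iff_right₀ hc0).2 (by linarith [hx.2])
  set s : ℝ → ℝ := fun x => Real.sin (c*(x-a)) with hs
  set co : ℝ → ℝ := fun x => Real.cos (c*(x-a)) with hco
  have hsc : Continuous s := Real.continuous_sin.comp (by fun_prop)
  have hcc : Continuous co := Real.continuous_cos.comp (by fun_prop)
  set F : ℝ → ℝ := fun x => c * (co x / s x * g x ^ 2) with hF
  set F' : ℝ → ℝ := fun x =>
    c * ((((-s x * c) * s x - co x * (co x * c)) / (s x)^2) * g x ^ 2
      + (co x / s x) * (2 * g x ^ 1 * deriv g x)) with hF'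
  have hFderiv : ∀ x ∈ Ioo a b, HasDerivAt F (F' x) x := by
    intro x hx
    have hinner : HasDerivAt (fun y : ℝ => c*(y-a)) c x := by
      simpa using ((hasDerivAt_id x).sub_const a).const_mul c
    have hqd := (hinner.cos.div hinner.sin (ne_of_gt (hsin_pos x hx)))
    have hg2 : HasDerivAt (fun y => g y ^ 2) (2 * g x ^ 1 * deriv g x) x :=
      ((hg x).hasDerivAt).pow 2
    exact (hqd.mul hg2).const_mul c
  have hkey : ∀ x ∈ Ioo a b, F' x + c^2 * g x ^ 2 ≤ (deriv g x)^2 := by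
    intro x hx
    have h := alg c (s x) (co x) (g x) (deriv g x) (hsin_pos x hx)
    simpa [hF', pow_one] using h
  have hF'cont : ContinuousOn F' (Ioo a b) := by
    have h1 : ContinuousOn (fun x => ((-s x * c) * s x - co x * (co x * c)) / (s x)^2 * g x ^ 2) (Ioo a b) :=
      (ContinuousOn.div (Continuous.continuousOn (by fun_prop)) ((hsc.pow 2).continuousOn)
        (fun x hx => pow_ne_zero _ (ne_of_gt (hsin_pos x hx)))).mul ((hg.continuous.pow 2).continuousOn)
    have h2 : ContinuousOn (fun x => co x / s x * (2 * g x ^ 1 * deriv g x)) (Ioo a b) :=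
      (hcc.continuousOn.div hsc.continuousOn (fun x hx => ne_of_gt (hsin_pos x hx))).mul
        (Continuous.continuousOn (by have := hg.continuous; fun_prop))
    exact ContinuousOn.mul continuousOn_const (h1.add h2)
  have hd2integrable : IntegrableOn (fun x => (deriv g x)^2) (Ioo a b) volume :=
    ((hg'.pow 2).continuousOn).integrableOn_compact isCompact_Icc |>.mono_set Ioo_subset_Icc_self
  have step : ∀ ε : ℝ, 0 < ε → ε < (b-a)/2 →
      ∫ x in (a+ε)..(b-ε), c^2 * g x ^2 ≤ (∫ t in Ioo a b, (deriv g t)^2) + F (a+ε) - F (b-ε) := by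
    intro ε hε hε2
    have hsub : Icc (a+ε) (b-ε) ⊆ Ioo a b := fun x hx => ⟨by linarith [hx.1], by linarith [hx.2]⟩
    have hle : a + ε ≤ b - ε := by linarith
    have huIcc : uIcc (a+ε) (b-ε) = Icc (a+ε) (b-ε) := uIcc_of_le hle
    have hF'int : IntervalIntegrable F' volume (a+ε) (b-ε) := by
      apply ContinuousOn.intervalIntegrable
      rw [huIcc]
      exact hF'cont.mono hsub
    have hftc : ∫ x in (a+ε)..(b-ε), F' x = F (b-ε) - F (a+ε) := by
      apply intervalIntegral.integral_eq_sub_of_hasDerivAt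
      · intro x hx
        exact hFderiv x (hsub (huIcc ▸ hx))
      · exact hF'int
    have hgint : IntervalIntegrable (fun x => c^2 * g x ^ 2) volume (a+ε) (b-ε) :=
      (Continuous.intervalIntegrable (by have := hg.continuous; fun_prop) _ _)
    have hd2int : IntervalIntegrable (fun x => (deriv g x)^2) volume (a+ε) (b-ε) :=
      (Continuous.intervalIntegrable (by fun_prop) _ _)
    have hmono : ∫ x in (a+ε)..(b-ε), (F' x + c^2 * g x ^2)
        ≤ ∫ x in (a+ε)..(b-ε), (deriv g x)^2 := by
      apply intervalIntegral.integral_mono_on hle (hF'int.add hgint) hd2int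
      intro x hx; exact hkey x (hsub hx)
    rw [intervalIntegral.integral_add hF'int hgint, hftc] at hmono
    have hIoc : ∫ x in (a+ε)..(b-ε), (deriv g x)^2 ≤ ∫ t in Ioo a b, (deriv g t)^2 := by
      rw [intervalIntegral.integral_of_le hle]
      apply setIntegral_mono_set hd2integrable
        (Filter.Eventually.of_forall (fun x => sq_nonneg _))
      exact HasSubset.Subset.eventuallyLE
        (fun x hx => ⟨by simp at hx ⊢; linarith [hx.1], by simp at hx ⊢; linarith [hx.2]⟩)
    linarith
  -- now take the limit ε → 0⁺
  have hg2int : ∀ p q : ℝ, IntervalIntegrable (fun x => c^2 * g x ^ 2) volume p q :=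
    fun p q => Continuous.intervalIntegrable (by have := hg.continuous; fun_prop) p q
  set P : ℝ → ℝ := fun t => ∫ x in a..t, c^2 * g x ^ 2 with hP
  have hPcont : Continuous P := intervalIntegral.continuous_primitive hg2int a
  have hIeq : ∀ ε : ℝ, ∫ x in (a+ε)..(b-ε), c^2 * g x ^2 = P (b-ε) - P (a+ε) := by
    intro ε
    rw [hP]
    rw [intervalIntegral.integral_interval_sub_left (hg2int a (b-ε)) (hg2int a (a+ε))]
  have hepsb : Tendsto (fun ε : ℝ => b - ε) (nhdsWithin 0 (Ioi 0)) (nhds b) := by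
    have : Tendsto (fun ε : ℝ => b - ε) (nhds 0) (nhds (b - 0)) :=
      (tendsto_const_nhds.sub tendsto_id)
    simpa using this.mono_left nhdsWithin_le_nhds
  have hepsa : Tendsto (fun ε : ℝ => a + ε) (nhdsWithin 0 (Ioi 0)) (nhds a) := by
    have : Tendsto (fun ε : ℝ => a + ε) (nhds 0) (nhds (a + 0)) :=
      (tendsto_const_nhds.add tendsto_id)
    simpa using this.mono_left nhdsWithin_le_nhds
  have T1 : Tendsto (fun ε : ℝ => ∫ x in (a+ε)..(b-ε), c^2 * g x ^2)
      (nhdsWithin 0 (Ioi 0)) (nhds (∫ x in a..b, c^2 * g x ^ 2)) := by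
    have h := ((hPcont.tendsto b).comp hepsb).sub ((hPcont.tendsto a).comp hepsa)
    have hPa : P a = 0 := intervalIntegral.integral_same
    simp only [Function.comp] at h
    rw [hPa, sub_zero] at h
    exact Tendsto.congr (fun ε => (hIeq ε).symm) h
  -- bounds on the boundary terms
  have hgbound : ∀ x ∈ Icc a b, |g x| ≤ M * |x - a| ∧ |g x| ≤ M * |b - x| := by
    intro x hx
    constructor
    · have := Convex.norm_image_sub_le_of_norm_hasDerivWithin_le
        (f := g) (f' := deriv g) (C := M) (s := Icc a b)
        (fun y hy => (hg y).hasDerivAt.hasDerivWithinAt) hM (convex_Icc a b)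
        (left_mem_Icc.2 hab.le) hx
      simpa [ha] using this
    · have := Convex.norm_image_sub_le_of_norm_hasDerivWithin_le
        (f := g) (f' := deriv g) (C := M) (s := Icc a b)
        (fun y hy => (hg y).hasDerivAt.hasDerivWithinAt) hM (convex_Icc a b)
        (right_mem_Icc.2 hab.le) hx
      simpa [hb, abs_sub_comm] using this
  have hFbound : ∀ ε : ℝ, 0 < ε → ε < (b-a)/2 →
      0 ≤ F (a+ε) - F (b-ε) ∧ F (a+ε) - F (b-ε) ≤ π * M^2 * ε := by
    intro ε hε hε2
    have hcε1 : 0 < c * ε := mul_pos hc0 hε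
    have hcε2 : c * ε ≤ π / 2 := by
      have : c * ε ≤ c * ((b-a)/2) := by nlinarith
      calc c * ε ≤ c * ((b-a)/2) := this
        _ = π/2 := by rw [← hcL]; ring
    have hsinlow : 2/π * (c*ε) ≤ Real.sin (c*ε) := Real.mul_le_sin hcε1.le hcε2
    have hsinpos : 0 < Real.sin (c*ε) := lt_of_lt_of_le (by positivity) hsinlow
    have hcosnn : 0 ≤ Real.cos (c*ε) := Real.cos_nonneg_of_mem_Icc ⟨by linarith, hcε2⟩
    have hcosle : Real.cos (c*ε) ≤ 1 := Real.cos_le_one _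
    -- F(a+ε)
    have hFa_eq : F (a+ε) = c * (Real.cos (c*ε)/Real.sin (c*ε) * g (a+ε)^2) := by
      simp [hF, hs, hco, add_sub_cancel_left]
    have hFb_eq : F (b-ε) = -(c * (Real.cos (c*ε)/Real.sin (c*ε) * g (b-ε)^2)) := by
      have harg : c * (b - ε - a) = π - c * ε := by rw [← hcL]; ring
      simp only [hF, hs, hco, harg, Real.sin_pi_sub, Real.cos_pi_sub]
      ring
    have hga : g (a+ε)^2 ≤ (M*ε)^2 := by
      have h := (hgbound (a+ε) ⟨by linarith, by linarith⟩).1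
      have : |g (a+ε)| ≤ M * ε := by
        simpa [abs_of_pos hε] using h
      nlinarith [abs_nonneg (g (a+ε)), sq_abs (g (a+ε))]
    have hgb : g (b-ε)^2 ≤ (M*ε)^2 := by
      have h := (hgbound (b-ε) ⟨by linarith, by linarith⟩).2
      have : |g (b-ε)| ≤ M * ε := by
        simpa [abs_of_pos hε] using h
      nlinarith [abs_nonneg (g (b-ε)), sq_abs (g (b-ε))]
    have hterm : ∀ G2 : ℝ, 0 ≤ G2 → G2 ≤ (M*ε)^2 →
        0 ≤ c * (Real.cos (c*ε)/Real.sin (c*ε) * G2) ∧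
        c * (Real.cos (c*ε)/Real.sin (c*ε) * G2) ≤ π * M^2 * ε / 2 := by
      intro G2 hG2 hG2le
      have hq0 : 0 ≤ Real.cos (c*ε)/Real.sin (c*ε) := div_nonneg hcosnn hsinpos.le
      constructor
      · positivity
      · have hqle : Real.cos (c*ε)/Real.sin (c*ε) ≤ π/(2*(c*ε)) := by
          rw [div_le_div_iff₀ hsinpos (by positivity)]
          calc Real.cos (c*ε) * (2*(c*ε)) ≤ 1 * (2*(c*ε)) := by nlinarith
            _ = π * (2/π * (c*ε)) := by field_simp
            _ ≤ π * Real.sin (c*ε) := by nlinarith [pi_pos]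
        calc c * (Real.cos (c*ε)/Real.sin (c*ε) * G2) ≤ c * (π/(2*(c*ε)) * (M*ε)^2) := by
              apply mul_le_mul_of_nonneg_left _ hc0.le
              exact mul_le_mul hqle hG2le hG2 (by positivity)
          _ = π * M^2 * ε / 2 := by field_simp
    obtain ⟨ha0, hale⟩ := hterm _ (sq_nonneg _) hga
    obtain ⟨hb0, hble⟩ := hterm _ (sq_nonneg _) hgb
    rw [hFa_eq, hFb_eq]
    constructor <;> linarith
  -- conclusion by squeeze
  have TF : Tendsto (fun ε : ℝ => F (a+ε) - F (b-ε)) (nhdsWithin 0 (Ioi 0)) (nhds 0) := by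
    apply squeeze_zero'
    · filter_upwards [Ioo_mem_nhdsGT_of_mem (Set.left_mem_Ico.2 (by linarith : (0:ℝ) < (b-a)/2))]
        with ε hε
      exact (hFbound ε hε.1 hε.2).1
    · filter_upwards [Ioo_mem_nhdsGT_of_mem (Set.left_mem_Ico.2 (by linarith : (0:ℝ) < (b-a)/2))]
        with ε hε
      exact (hFbound ε hε.1 hε.2).2
    · have : Tendsto (fun ε : ℝ => π * M^2 * ε) (nhds 0) (nhds (π * M^2 * 0)) :=
        tendsto_const_nhds.mul tendsto_id
      simpa using this.mono_left nhdsWithin_le_nhds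
  have TR : Tendsto (fun ε : ℝ => (∫ t in Ioo a b, (deriv g t)^2) + F (a+ε) - F (b-ε))
      (nhdsWithin 0 (Ioi 0)) (nhds (∫ t in Ioo a b, (deriv g t)^2)) := by
    have h := (tendsto_const_nhds (x := ∫ t in Ioo a b, (deriv g t)^2)
      (f := nhdsWithin (0:ℝ) (Ioi 0))).add TF
    simp only [add_zero] at h
    refine Tendsto.congr (fun ε => by ring) h
  have hfinal : ∫ x in a..b, c^2 * g x ^ 2 ≤ ∫ t in Ioo a b, (deriv g t)^2 := by
    refine le_of_tendsto_of_tendsto T1 TR ?_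
    filter_upwards [Ioo_mem_nhdsGT_of_mem (Set.left_mem_Ico.2 (by linarith : (0:ℝ) < (b-a)/2))]
      with ε hε
    exact step ε hε.1 hε.2
  calc ∫ t in Ioo a b, (π/(b-a))^2 * g t ^ 2 = ∫ x in a..b, c^2 * g x ^ 2 := by
        rw [intervalIntegral.integral_of_le hab.le, integral_Ioc_eq_integral_Ioo, hc]
    _ ≤ ∫ t in Ioo a b, (deriv g t)^2 := hfinal

lemma halfline (θ θ' : ℝ → ℝ) (hθ : ∀ x, HasDerivAt θ (θ' x) x) (hθ'c : Continuous θ')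
    (hmono : Monotone θ') (hpos : ∀ x, 0 ≤ x → 0 ≤ θ' x)
    (θinvp : ℝ → ℝ)
    (hinvp : ∀ α, θ 0 ≤ α → 0 ≤ θinvp α ∧ θ (θinvp α) = α ∧ ∀ z, 0 ≤ z → θ z = α → θinvp α ≤ z)
    (f : ℝ → ℝ) (hf_nonneg : ∀ x, 0 ≤ f x)
    (hfr : ∀ x, θinvp (θ 0 + 2*π) ≤ x → f x = (θ' (θinvp (θ x - π)))^2)
    (hf0 : ∀ x, 0 ≤ x → x < θinvp (θ 0 + 2*π) → f x = 0)
    (S : Set ℝ) (hS_open : IsOpen S)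
    (hπS : ∀ t ∈ S, ∀ s, θ s = θ t + π → s ∉ S)
    (g : ℝ → ℝ) (hg : Differentiable ℝ g) (hg' : Continuous (deriv g))
    (hgsupp : HasCompactSupport g)
    (hgS : ∀ t, t ∉ S → g t = 0)
    (hfgi : Integrable (fun t => f t * g t ^ 2)) :
    ∫ t in Ici (0:ℝ), f t * g t ^ 2 ≤ ∫ t in Ioi (0:ℝ), (deriv g t)^2 := by
  -- monotonicity of θ on [0,∞)
  have θmono : MonotoneOn θ (Ici (0:ℝ)) := by
    apply monotoneOn_of_deriv_nonneg (convex_Ici 0)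
      (fun x _ => (hθ x).continuousAt.continuousWithinAt)
    · intro x hx
      exact ((hθ x).differentiableAt).differentiableWithinAt
    · intro x hx
      rw [interior_Ici] at hx
      rw [(hθ x).deriv]
      exact hpos x (le_of_lt hx)
  set xp := θinvp (θ 0 + 2*π) with hxpdef
  obtain ⟨hxp0, hθxp, _⟩ := hinvp (θ 0 + 2*π) (by linarith [pi_pos])
  have hxppos : 0 < xp := by
    rcases eq_or_lt_of_le hxp0 with h | h
    · exfalso; rw [← h] at hθxp; linarith [pi_pos]
    · exact h
  -- derivative vanishes where θ is locally constant
  have hflat : ∀ p r : ℝ, 0 ≤ p → p < r → θ p = θ r → θ' r = 0 := by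
    intro p r hp hpr hθpr
    have hconst : ∀ z ∈ Icc p r, θ z = θ p := by
      intro z hz
      have h1 : θ p ≤ θ z := θmono (by exact hp) (by exact le_trans hp hz.1) hz.1
      have h2 : θ z ≤ θ r := θmono (le_trans hp hz.1) (le_trans hp (le_of_lt hpr)) hz.2
      linarith [hθpr ▸ h2]
    have hzero : ∀ z ∈ Ioo p r, θ' z = 0 := by
      intro z hz
      have hev : θ =ᶠ[nhds z] fun _ => θ p := by
        filter_upwards [Ioo_mem_nhds hz.1 hz.2] with w hw
        exact hconst w ⟨hw.1.le, hw.2.le⟩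
      have h1 : HasDerivAt (fun _ : ℝ => θ p) (θ' z) z := HasDerivAt.congr_of_eventuallyEq (hθ z) hev.symm
      have h2 : HasDerivAt (fun _ : ℝ => θ p) 0 z := hasDerivAt_const z (θ p)
      exact h1.unique h2
    have hne : (nhdsWithin r (Iio r)).NeBot := by infer_instance
    have hten : Tendsto θ' (nhdsWithin r (Iio r)) (nhds (θ' r)) :=
      (hθ'c.tendsto r).mono_left nhdsWithin_le_nhds
    have hten0 : Tendsto θ' (nhdsWithin r (Iio r)) (nhds 0) := by
      apply Tendsto.congr' _ tendsto_const_nhds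
      filter_upwards [Ioo_mem_nhdsLT_of_mem (⟨hpr, le_refl r⟩ : r ∈ Ioc p r)] with z hz
      exact (hzero z hz).symm
    exact tendsto_nhds_unique hten hten0
  -- per-component structure
  have comp_struct : ∀ t₀, t₀ ∈ S → xp ≤ t₀ →
      ∃ a b : ℝ, 0 < a ∧ a < b ∧ connectedComponentIn S t₀ = Ioo a b ∧
        g a = 0 ∧ g b = 0 ∧ ∀ x ∈ Ioo a b, f x * (b - a)^2 ≤ π^2 := by
    intro t₀ ht₀S ht₀x
    set C := connectedComponentIn S t₀ with hCdef
    have hC_sub : C ⊆ S := connectedComponentIn_subset S t₀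
    have ht₀C : t₀ ∈ C := mem_connectedComponentIn ht₀S
    have hC_open : IsOpen C := hS_open.connectedComponentIn
    have hC_conn : IsPreconnected C := isPreconnected_connectedComponentIn
    have hC_ord := hC_conn.ordConnected
    have ht₀0 : (0:ℝ) ≤ t₀ := le_trans hxp0 ht₀x
    have hθt₀ : θ 0 + 2*π ≤ θ t₀ := by
      have := θmono (mem_Ici.2 hxp0) (mem_Ici.2 ht₀0) ht₀x
      linarith [hθxp ▸ this]
    -- the zero below t₀
    obtain ⟨hξ₀0, hθξ₀, _⟩ := hinvp (θ t₀ - π) (by linarith [pi_pos])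
    set ξ₀ := θinvp (θ t₀ - π) with hξ₀def
    have hξ₀S : ξ₀ ∉ S := by
      intro hmem
      exact hπS ξ₀ hmem t₀ (by linarith) ht₀S
    have hξ₀t₀ : ξ₀ < t₀ := by
      rcases lt_or_ge ξ₀ t₀ with h | h
      · exact h
      · exfalso
        have := θmono (mem_Ici.2 ht₀0) (mem_Ici.2 hξ₀0) h
        rw [hθξ₀] at this; linarith [pi_pos]
    have hlow : ∀ x ∈ C, ξ₀ < x := by
      intro x hx
      by_contra h
      push_neg at h
      exact hξ₀S (hC_sub (hC_ord.out hx ht₀C ⟨h, hξ₀t₀.le⟩))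
    -- the zero above every point of C
    have hη : ∀ t ∈ C, ∃ η, 0 ≤ η ∧ θ η = θ t + π ∧ η ∉ S ∧ t < η ∧ ∀ x ∈ C, x < η := by
      intro t htC
      have ht0 : (0:ℝ) < t := lt_of_le_of_lt hξ₀0 (hlow t htC)
      have hθt : θ 0 ≤ θ t := θmono (le_refl (0:ℝ) : (0:ℝ) ∈ Ici (0:ℝ)) (mem_Ici.2 ht0.le) ht0.le
      obtain ⟨hη0, hθη, _⟩ := hinvp (θ t + π) (by linarith [pi_pos])
      set η := θinvp (θ t + π) with hηdef
      have hηS : η ∉ S := hπS t (hC_sub htC) η hθη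
      have htη : t < η := by
        rcases lt_or_ge t η with h | h
        · exact h
        · exfalso
          have := θmono (mem_Ici.2 hη0) (mem_Ici.2 ht0.le) h
          rw [hθη] at this; linarith [pi_pos]
      refine ⟨η, hη0, hθη, hηS, htη, ?_⟩
      intro x hx
      by_contra h
      push_neg at h
      exact hηS (hC_sub (hC_ord.out htC hx ⟨htη.le, h⟩))
    obtain ⟨η₀, hη₀0, hθη₀, hη₀S, htη₀, hup₀⟩ := hη t₀ ht₀C
    -- sup and inf
    have hCne : C.Nonempty := ⟨t₀, ht₀C⟩
    have hbdda : BddAbove C := ⟨η₀, fun x hx => (hup₀ x hx).le⟩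
    have hbddb : BddBelow C := ⟨ξ₀, fun x hx => (hlow x hx).le⟩
    set a := sInf C with hadef
    set b := sSup C with hbdef
    have haC : a ∉ C := by
      intro hmem
      obtain ⟨ε, hε, hball⟩ := Metric.isOpen_iff.1 hC_open a hmem
      have : a - ε/2 ∈ C := hball (by simp [Real.ball_eq_Ioo]; constructor <;> linarith)
      linarith [csInf_le hbddb this]
    have hbC : b ∉ C := by
      intro hmem
      obtain ⟨ε, hε, hball⟩ := Metric.isOpen_iff.1 hC_open b hmem
      have : b + ε/2 ∈ C := hball (by simp [Real.ball_eq_Ioo]; constructor <;> linarith)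
      linarith [le_csSup hbdda this]
    have hat₀ : a < t₀ := lt_of_le_of_ne (csInf_le hbddb ht₀C) (fun h => haC (h ▸ ht₀C))
    have ht₀b : t₀ < b := lt_of_le_of_ne (le_csSup hbdda ht₀C) (fun h => hbC (h.symm ▸ ht₀C))
    have hab : a < b := lt_trans hat₀ ht₀b
    have hCIoo : C = Ioo a b := by
      apply Subset.antisymm
      · intro x hx
        exact ⟨lt_of_le_of_ne (csInf_le hbddb hx) (fun h => haC (h ▸ hx)),
               lt_of_le_of_ne (le_csSup hbdda hx) (fun h => hbC (h.symm ▸ hx))⟩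
      · intro x hx
        obtain ⟨x₁, hx₁C, hx₁⟩ := exists_lt_of_csInf_lt hCne hx.1
        obtain ⟨x₂, hx₂C, hx₂⟩ := exists_lt_of_lt_csSup hCne hx.2
        exact hC_ord.out hx₁C hx₂C ⟨hx₁.le, hx₂.le⟩
    have ha0 : 0 < a := by
      have := hlow t₀ ht₀C
      have h2 : ξ₀ ≤ a := le_csInf hCne (fun x hx => (hlow x hx).le)
      rcases eq_or_lt_of_le h2 with h | h
      · -- a = ξ₀ ≥ 0; need strict: show 0 < ξ₀ since θ ξ₀ = θ t₀ - π ≥ θ0 + π > θ 0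
        rcases eq_or_lt_of_le hξ₀0 with h0 | h0
        · exfalso; rw [← h0] at hθξ₀; linarith [pi_pos]
        · linarith
      · linarith
    -- endpoints not in S
    have hanotS : a ∉ S := by
      intro hmem
      obtain ⟨ε, hε, hball⟩ := Metric.isOpen_iff.1 hS_open a hmem
      set ε' := min ε (b - a) with hε'
      have hε'0 : 0 < ε' := lt_min hε (by linarith)
      have hD : Ioo (a - ε') b ⊆ S := by
        intro x hx
        rcases lt_or_ge x (a + ε') with h | h
        · apply hball
          simp [Real.ball_eq_Ioo]
          constructor
          · calc a - ε ≤ a - ε' := by linarith [min_le_left ε (b-a)]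
              _ < x := hx.1
          · calc x < a + ε' := h
              _ ≤ a + ε := by linarith [min_le_left ε (b-a)]
        · have hmem2 : x ∈ Ioo a b := ⟨by linarith, hx.2⟩
          rw [← hCIoo] at hmem2
          exact hC_sub hmem2
      have hDsub : Ioo (a - ε') b ⊆ C :=
        (isPreconnected_Ioo).subset_connectedComponentIn
          (⟨by linarith, ht₀b⟩ : t₀ ∈ Ioo (a - ε') b) hD
      have : a ∈ C := hDsub ⟨by linarith, by linarith⟩
      exact haC this
    have hbnotS : b ∉ S := by
      intro hmem
      obtain ⟨ε, hε, hball⟩ := Metric.isOpen_iff.1 hS_open b hmem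
      set ε' := min ε (b - a) with hε'
      have hε'0 : 0 < ε' := lt_min hε (by linarith)
      have hD : Ioo a (b + ε') ⊆ S := by
        intro x hx
        rcases lt_or_ge (b - ε') x with h | h
        · apply hball
          simp [Real.ball_eq_Ioo]
          constructor
          · calc b - ε ≤ b - ε' := by linarith [min_le_left ε (b-a)]
              _ < x := h
          · calc x < b + ε' := hx.2
              _ ≤ b + ε := by linarith [min_le_left ε (b-a)]
        · have hmem2 : x ∈ Ioo a b := ⟨hx.1, by linarith [min_le_right ε (b-a)]⟩
          rw [← hCIoo] at hmem2
          exact hC_sub hmem2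
      have hDsub : Ioo a (b + ε') ⊆ C :=
        (isPreconnected_Ioo).subset_connectedComponentIn
          (⟨hat₀, by linarith⟩ : t₀ ∈ Ioo a (b + ε')) hD
      exact hbC (hDsub ⟨hab, by linarith⟩)
    -- θ-span at most π
    have hspan : θ b ≤ θ a + π := by
      have hbound : ∀ t ∈ Ioo a b, θ b - π ≤ θ t := by
        intro t ht
        obtain ⟨η, hη0, hθη, hηS, htη, hup⟩ := hη t (hCIoo ▸ ht)
        have hbη : b ≤ η := csSup_le hCne (fun x hx => (hup x hx).le)
        have : θ b ≤ θ η := θmono (mem_Ici.2 (by linarith)) (mem_Ici.2 hη0) hbη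
        linarith [hθη ▸ this]
      have hten : Tendsto θ (nhdsWithin a (Ioi a)) (nhds (θ a)) :=
        ((hθ a).continuousAt.tendsto).mono_left nhdsWithin_le_nhds
      have : θ b - π ≤ θ a := by
        apply ge_of_tendsto hten
        filter_upwards [Ioo_mem_nhdsGT_of_mem (⟨le_refl a, hab⟩ : a ∈ Ico a b)] with t ht
        exact hbound t ht
      linarith
    refine ⟨a, b, ha0, hab, hCIoo, hgS a hanotS, hgS b hbnotS, ?_⟩
    -- the f bound
    intro x hx
    rcases lt_or_ge x xp with hcase | hcase
    · rw [hf0 x (le_of_lt (lt_trans ha0 hx.1)) hcase]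
      simpa using sq_nonneg π
    · have hx0 : (0:ℝ) < x := lt_trans ha0 hx.1
      have hθx : θ 0 + 2*π ≤ θ x := by
        have := θmono (mem_Ici.2 hxp0) (mem_Ici.2 hx0.le) hcase
        linarith [hθxp ▸ this]
      obtain ⟨hξ0, hθξ, _⟩ := hinvp (θ x - π) (by linarith [pi_pos])
      set ξ := θinvp (θ x - π) with hξdef
      rw [hfr x hcase, ← hξdef]
      -- θ' ξ ≤ θ' s for s ∈ Icc a b
      have hclaim : ∀ s ∈ Icc a b, θ' ξ ≤ θ' s := by
        intro s hs
        rcases le_or_gt ξ s with h | h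
        · exact hmono h
        · -- s < ξ : degenerate, θ' ξ = 0
          have hs0 : (0:ℝ) < s := lt_of_lt_of_le ha0 hs.1
          have h1 : θ s ≤ θ ξ := θmono (mem_Ici.2 hs0.le) (mem_Ici.2 hξ0) h.le
          have h2 : θ ξ ≤ θ s := by
            have hxb : θ x ≤ θ b := θmono (mem_Ici.2 hx0.le) (mem_Ici.2 (by linarith)) hx.2.le
            have has : θ a ≤ θ s := θmono (mem_Ici.2 ha0.le) (mem_Ici.2 hs0.le) hs.1
            rw [hθξ]; linarith
          have heq : θ s = θ ξ := le_antisymm h1 h2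
          have : θ' ξ = 0 := hflat s ξ hs0.le h heq
          rw [this]
          exact hpos s hs0.le
      have hftc : θ b - θ a = ∫ s in a..b, θ' s := by
        rw [intervalIntegral.integral_eq_sub_of_hasDerivAt (fun s _ => hθ s)
          (hθ'c.intervalIntegrable a b)]
      have hintmono : θ' ξ * (b - a) ≤ θ b - θ a := by
        rw [hftc]
        have h1 : ∫ s in a..b, θ' ξ ≤ ∫ s in a..b, θ' s := by
          apply intervalIntegral.integral_mono_on hab.le
            (intervalIntegrable_const) (hθ'c.intervalIntegrable a b)
          exact hclaim
        rw [intervalIntegral.integral_const, smul_eq_mul, mul_comm] at h1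
        exact h1
      have hθ'ξ0 : 0 ≤ θ' ξ := hpos ξ hξ0
      have hπbd : θ' ξ * (b - a) ≤ π := by linarith
      nlinarith [sq_nonneg (θ' ξ * (b-a)), pi_pos, mul_nonneg hθ'ξ0 (le_of_lt (by linarith : (0:ℝ) < b - a))]
  -- Summation over components
  set T : Set (Set ℝ) := {C | ∃ t, t ∈ S ∧ xp ≤ t ∧ C = connectedComponentIn S t} with hTdef
  have hT_open : ∀ C ∈ T, IsOpen C := by
    rintro C ⟨t, htS, htx, rfl⟩; exact hS_open.connectedComponentIn
  have hT_ne : ∀ C ∈ T, C.Nonempty := by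
    rintro C ⟨t, htS, htx, rfl⟩; exact ⟨t, mem_connectedComponentIn htS⟩
  have hT_comp : ∀ C ∈ T, ∀ x ∈ C, C = connectedComponentIn S x := by
    rintro C ⟨t, htS, htx, rfl⟩ x hx; exact connectedComponentIn_eq hx
  haveI hT_count : Countable ↥T := by
    have hchoice : ∀ C : ↥T, ∃ q : ℚ, (q:ℝ) ∈ (C : Set ℝ) := fun C =>
      Rat.denseRange_cast.exists_mem_open (hT_open C C.2) (hT_ne C C.2)
    choose F hF using hchoice
    have hinj : Function.Injective F := by
      intro C₁ C₂ hq
      have h1 : ((F C₁ : ℚ):ℝ) ∈ (C₁ : Set ℝ) := hF C₁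
      have h2 : ((F C₁ : ℚ):ℝ) ∈ (C₂ : Set ℝ) := by rw [hq]; exact hF C₂
      apply Subtype.ext
      rw [hT_comp C₁ C₁.2 _ h1, hT_comp C₂ C₂.2 _ h2]
    exact hinj.countable
  have hmeas : ∀ i : ↥T, MeasurableSet (i : Set ℝ) := fun i => (hT_open i i.2).measurableSet
  have hdisj : Pairwise (Function.onFun Disjoint (fun i : ↥T => (i : Set ℝ))) := by
    intro i j hij
    rw [Function.onFun, Set.disjoint_left]
    intro x hxi hxj
    apply hij
    apply Subtype.ext
    rw [hT_comp i i.2 x hxi, hT_comp j j.2 x hxj]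
  set U : Set ℝ := ⋃ i : ↥T, (i : Set ℝ) with hUdef
  have hcomp : ∀ i : ↥T, ∃ a b : ℝ, 0 < a ∧ a < b ∧ (i : Set ℝ) = Ioo a b ∧
      g a = 0 ∧ g b = 0 ∧ ∀ x ∈ Ioo a b, f x * (b - a)^2 ≤ π^2 := by
    intro i
    obtain ⟨t, htS, htx, hC⟩ := i.2
    obtain ⟨a, b, ha0, hab, hCeq, hga, hgb, hfb⟩ := comp_struct t htS htx
    exact ⟨a, b, ha0, hab, by rw [hC, hCeq], hga, hgb, hfb⟩
  have hU_Ioi : U ⊆ Ioi (0:ℝ) := by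
    intro x hx
    obtain ⟨i, hi⟩ := mem_iUnion.1 hx
    obtain ⟨a, b, ha0, hab, hieq, _, _, _⟩ := hcomp i
    rw [hieq] at hi
    exact lt_trans ha0 hi.1
  have hg2cs : HasCompactSupport (fun t => g t ^ 2) := by
    have := hgsupp.comp_left (g := fun y : ℝ => y^2) (by simp)
    simpa [Function.comp_def] using this
  have hd2cs : HasCompactSupport (fun t => (deriv g t) ^ 2) := by
    have := (hgsupp.deriv).comp_left (g := fun y : ℝ => y^2) (by simp)
    simpa [Function.comp_def] using this
  have hd2i : Integrable (fun t => (deriv g t)^2) := (hg'.pow 2).integrable_of_hasCompactSupport hd2cs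
  have hg2i : Integrable (fun t => g t ^ 2) := (hg.continuous.pow 2).integrable_of_hasCompactSupport hg2cs
  have hcompineq : ∀ i : ↥T, ∫ t in (i:Set ℝ), f t * g t ^ 2 ≤ ∫ t in (i:Set ℝ), (deriv g t)^2 := by
    intro i
    obtain ⟨a, b, ha0, hab, hieq, hga, hgb, hfb⟩ := hcomp i
    rw [hieq]
    calc ∫ t in Ioo a b, f t * g t ^ 2 ≤ ∫ t in Ioo a b, (π/(b-a))^2 * g t^2 := by
          apply setIntegral_mono_on (hfgi.integrableOn)
            ((hg2i.const_mul _).integrableOn) measurableSet_Ioo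
          intro x hx
          have hba : (0:ℝ) < (b-a)^2 := by nlinarith [hab]
          have hfle : f x ≤ (π/(b-a))^2 := by
            rw [div_pow, le_div_iff₀ hba]
            exact hfb x hx
          exact mul_le_mul_of_nonneg_right hfle (sq_nonneg _)
      _ ≤ ∫ t in Ioo a b, (deriv g t)^2 := poincare1D hg hg' hab hga hgb
  have hUmeas : MeasurableSet U := MeasurableSet.iUnion hmeas
  have hvanish : ∀ t ∈ Ici (0:ℝ) \ U, f t * g t ^ 2 = 0 := by
    rintro t ⟨ht0, htU⟩
    by_cases htS : t ∈ S
    · rcases lt_or_ge t xp with hlt | hge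
      · rw [hf0 t ht0 hlt]; ring
      · exfalso
        apply htU
        exact mem_iUnion.2 ⟨⟨connectedComponentIn S t, ⟨t, htS, hge, rfl⟩⟩,
          mem_connectedComponentIn htS⟩
    · rw [hgS t htS]; ring
  have hsplit : ∫ t in Ici (0:ℝ), f t * g t ^ 2 = ∫ t in U, f t * g t ^ 2 := by
    have hUIci : U ⊆ Ici (0:ℝ) := fun x hx => mem_Ici.2 (le_of_lt (hU_Ioi hx))
    have hdecomp : Ici (0:ℝ) = U ∪ (Ici 0 \ U) := by
      rw [Set.union_diff_cancel hUIci]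
    rw [hdecomp, setIntegral_union Set.disjoint_sdiff_right (measurableSet_Ici.diff hUmeas)
      hfgi.integrableOn hfgi.integrableOn,
      setIntegral_eq_zero_of_forall_eq_zero hvanish, add_zero]
  have hsum1 : ∫ t in U, f t * g t ^ 2 = ∑' i : ↥T, ∫ t in (i:Set ℝ), f t * g t ^ 2 :=
    integral_iUnion hmeas hdisj hfgi.integrableOn
  have hsum2 : HasSum (fun i : ↥T => ∫ t in (i:Set ℝ), (deriv g t)^2) (∫ t in U, (deriv g t)^2) :=
    hasSum_integral_iUnion hmeas hdisj hd2i.integrableOn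
  have hsummableR : Summable (fun i : ↥T => ∫ t in (i:Set ℝ), (deriv g t)^2) := hsum2.summable
  have hsummableL : Summable (fun i : ↥T => ∫ t in (i:Set ℝ), f t * g t ^ 2) :=
    Summable.of_nonneg_of_le
      (fun i => setIntegral_nonneg (hmeas i) (fun x _ => mul_nonneg (hf_nonneg x) (sq_nonneg _)))
      hcompineq hsummableR
  calc ∫ t in Ici (0:ℝ), f t * g t ^ 2 = ∑' i : ↥T, ∫ t in (i:Set ℝ), f t * g t ^ 2 := by
        rw [hsplit, hsum1]
    _ ≤ ∑' i : ↥T, ∫ t in (i:Set ℝ), (deriv g t)^2 :=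
        hsummableL.tsum_le_tsum hcompineq hsummableR
    _ = ∫ t in U, (deriv g t)^2 := hsum2.tsum_eq
    _ ≤ ∫ t in Ioi (0:ℝ), (deriv g t)^2 := by
        apply setIntegral_mono_set hd2i.integrableOn
          (Filter.Eventually.of_forall (fun x => sq_nonneg _))
        exact HasSubset.Subset.eventuallyLE hU_Ioi

/-- Lemma 3.1: for the twisted tube `Ω = 𝔏(ℝ × ω)` with cross-section `ω` in the open
half-plane `{y₂ > 0}` and rotation angle `θ` with monotonically increasing derivative `θ'`
(nonnegative on `ℝ₊`, nonpositive on `ℝ₋`, `|θ'| → ∞` at infinity), every continuously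
differentiable `u : ℝ³ → ℝ` with compact support contained in `Ω` satisfies
`∫_{ℝ³} |∂u/∂x₁|² ≥ ∫_{ℝ³} f(x₁)|u|²`, where `f` is defined via the generalized inverses
`θ₊⁻¹`, `θ₋⁻¹` of `θ`. -/
theorem hardy_type_estimate
    (ω : Set (ℝ × ℝ)) (hω_ne : ω.Nonempty) (hω_bdd : Bornology.IsBounded ω)
    (hω_open : IsOpen ω) (hω_conn : IsConnected ω)
    (hω_half : ω ⊆ {y : ℝ × ℝ | 0 < y.1})
    (θ θ' : ℝ → ℝ)
    (hθ : ∀ x, HasDerivAt θ (θ' x) x) (hθ'c : Continuous θ')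
    (hmono : Monotone θ')
    (hpos : ∀ x, 0 ≤ x → 0 ≤ θ' x) (hneg : ∀ x, x ≤ 0 → θ' x ≤ 0)
    (hinf : Tendsto (fun x => |θ' x|) (cocompact ℝ) atTop)
    (Ω : Set (ℝ × ℝ × ℝ))
    (hΩ : Ω = (fun q : ℝ × ℝ × ℝ =>
      (q.1, q.2.1 * Real.cos (θ q.1) + q.2.2 * Real.sin (θ q.1),
       q.2.2 * Real.cos (θ q.1) - q.2.1 * Real.sin (θ q.1))) '' (Set.univ ×ˢ ω))
    (θinvp θinvm : ℝ → ℝ)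
    (hinvp : ∀ α, θ 0 ≤ α →
      0 ≤ θinvp α ∧ θ (θinvp α) = α ∧ ∀ z, 0 ≤ z → θ z = α → θinvp α ≤ z)
    (hinvm : ∀ α, θ 0 ≤ α →
      θinvm α ≤ 0 ∧ θ (θinvm α) = α ∧ ∀ z, z ≤ 0 → θ z = α → z ≤ θinvm α)
    (f : ℝ → ℝ)
    (hf₁ : ∀ x, θinvp (θ 0 + 2 * π) ≤ x → f x = (θ' (θinvp (θ x - π))) ^ 2)
    (hf₂ : ∀ x, x ≤ θinvm (θ 0 + 2 * π) → f x = (θ' (θinvm (θ x - π))) ^ 2)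
    (hf₃ : ∀ x, θinvm (θ 0 + 2 * π) < x → x < θinvp (θ 0 + 2 * π) → f x = 0)
    (u : ℝ × ℝ × ℝ → ℝ)
    (hu : ContDiff ℝ 1 u)
    (husupp : HasCompactSupport u)
    (huΩ : tsupport u ⊆ Ω) :
    ∫ p : ℝ × ℝ × ℝ, f p.1 * (u p) ^ 2 ≤
      ∫ p : ℝ × ℝ × ℝ, (deriv (fun t => u (t, p.2)) p.1) ^ 2 := by
  -- continuity of θ
  have hθcont : Continuous θ := by
    rw [continuous_iff_continuousAt]; exact fun x => (hθ x).continuousAt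
  -- monotonicity of θ on the two half lines
  have θmonoI : MonotoneOn θ (Ici (0:ℝ)) := by
    apply monotoneOn_of_deriv_nonneg (convex_Ici 0) hθcont.continuousOn
      (fun x _ => ((hθ x).differentiableAt).differentiableWithinAt)
    intro x hx
    rw [interior_Ici] at hx
    rw [(hθ x).deriv]
    exact hpos x (le_of_lt hx)
  have θantiI : AntitoneOn θ (Iic (0:ℝ)) := by
    apply antitoneOn_of_deriv_nonpos (convex_Iic 0) hθcont.continuousOn
      (fun x _ => ((hθ x).differentiableAt).differentiableWithinAt)
    intro x hx
    rw [interior_Iic] at hx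
    rw [(hθ x).deriv]
    exact hneg x (le_of_lt hx)
  obtain ⟨hxp0, hθxp, hxpmin⟩ := hinvp (θ 0 + 2 * π) (by linarith [pi_pos])
  obtain ⟨hxm0, hθxm, hxmmax⟩ := hinvm (θ 0 + 2 * π) (by linarith [pi_pos])
  set xp := θinvp (θ 0 + 2 * π) with hxpdef
  set xm := θinvm (θ 0 + 2 * π) with hxmdef
  have hxppos : 0 < xp := by
    rcases eq_or_lt_of_le hxp0 with h | h
    · exfalso; rw [← h] at hθxp; linarith [pi_pos]
    · exact h
  have hxmneg : xm < 0 := by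
    rcases eq_or_lt_of_le hxm0 with h | h
    · exfalso; rw [h] at hθxm; linarith [pi_pos]
    · exact h
  -- the rotation map and slice description of Ω
  set rot : ℝ → ℝ × ℝ → ℝ × ℝ := fun α y =>
    (y.1 * Real.cos α - y.2 * Real.sin α, y.1 * Real.sin α + y.2 * Real.cos α) with hrotdef
  have hΩsub : Ω ⊆ {p : ℝ × ℝ × ℝ | rot (θ p.1) p.2 ∈ ω} := by
    rw [hΩ]
    rintro p ⟨q, ⟨-, hqω⟩, rfl⟩
    simp only [mem_setOf_eq]
    have hpyth := Real.sin_sq_add_cos_sq (θ q.1)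
    have h1 : rot (θ q.1) (q.2.1 * Real.cos (θ q.1) + q.2.2 * Real.sin (θ q.1),
        q.2.2 * Real.cos (θ q.1) - q.2.1 * Real.sin (θ q.1)) = (q.2.1, q.2.2) := by
      rw [hrotdef]
      apply Prod.ext
      · simp only
        linear_combination q.2.1 * hpyth
      · simp only
        linear_combination q.2.2 * hpyth
    exact h1 ▸ hqω
  have hπkey : ∀ (y : ℝ × ℝ) (t s : ℝ), rot (θ t) y ∈ ω → θ s = θ t + π → rot (θ s) y ∉ ω := by
    intro y t s hty hts hsy
    have h1 : rot (θ s) y = (-(rot (θ t) y).1, -(rot (θ t) y).2) := by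
      rw [hts, hrotdef]
      simp only [Real.cos_add_pi, Real.sin_add_pi]
      apply Prod.ext <;> simp <;> ring
    have h2 := hω_half hty
    have h3 := hω_half hsy
    rw [h1] at h3
    simp only [mem_setOf_eq] at h2 h3
    linarith
  -- pointwise bounds on f
  have hf_both : ∀ x, 0 ≤ f x ∧ f x ≤ (θ' x)^2 := by
    intro x
    rcases le_or_gt xp x with hcase | hcase
    · rw [hf₁ x hcase]
      have hx0 : (0:ℝ) ≤ x := le_trans hxp0 hcase
      have hθx : θ 0 + 2*π ≤ θ x := hθxp ▸ θmonoI (mem_Ici.2 hxp0) (mem_Ici.2 hx0) hcase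
      obtain ⟨hξ0, hθξ, -⟩ := hinvp (θ x - π) (by linarith [pi_pos])
      have hξx : θinvp (θ x - π) ≤ x := by
        by_contra h
        push_neg at h
        have := θmonoI (mem_Ici.2 hx0) (mem_Ici.2 hξ0) h.le
        rw [hθξ] at this; linarith [pi_pos]
      have h1 : 0 ≤ θ' (θinvp (θ x - π)) := hpos _ hξ0
      have h2 : θ' (θinvp (θ x - π)) ≤ θ' x := hmono hξx
      exact ⟨sq_nonneg _, by nlinarith⟩
    · rcases le_or_gt x xm with hcase2 | hcase2
      · rw [hf₂ x hcase2]
        have hx0 : x ≤ (0:ℝ) := le_trans hcase2 hxm0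
        have hθx : θ 0 + 2*π ≤ θ x := hθxm ▸ θantiI (mem_Iic.2 hx0) (mem_Iic.2 hxm0) hcase2
        obtain ⟨hζ0, hθζ, -⟩ := hinvm (θ x - π) (by linarith [pi_pos])
        have hζx : x ≤ θinvm (θ x - π) := by
          by_contra h
          push_neg at h
          have := θantiI (mem_Iic.2 hζ0) (mem_Iic.2 hx0) h.le
          rw [hθζ] at this; linarith [pi_pos]
        have h1 : θ' (θinvm (θ x - π)) ≤ 0 := hneg _ hζ0
        have h2 : θ' x ≤ θ' (θinvm (θ x - π)) := hmono hζx
        exact ⟨sq_nonneg _, by nlinarith⟩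
      · rw [hf₃ x hcase2 hcase]
        exact ⟨le_refl 0, sq_nonneg _⟩
  have hf_nonneg : ∀ x, 0 ≤ f x := fun x => (hf_both x).1
  -- measurability of f
  have hinvp_mono : ∀ α β, θ 0 ≤ α → α ≤ β → θinvp α ≤ θinvp β := by
    intro α β hα hβ
    obtain ⟨hp0, hpv, hpm⟩ := hinvp β (le_trans hα hβ)
    have hmem : α ∈ Icc (θ 0) (θ (θinvp β)) := by rw [hpv]; exact ⟨hα, hβ⟩
    obtain ⟨z, hz, hθz⟩ := intermediate_value_Icc hp0 hθcont.continuousOn hmem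
    obtain ⟨-, -, hm⟩ := hinvp α hα
    exact le_trans (hm z hz.1 hθz) hz.2
  have hinvm_anti : ∀ α β, θ 0 ≤ α → α ≤ β → θinvm β ≤ θinvm α := by
    intro α β hα hβ
    obtain ⟨hm0, hmv, hmm⟩ := hinvm β (le_trans hα hβ)
    have hmem : α ∈ Icc (θ 0) (θ (θinvm β)) := by rw [hmv]; exact ⟨hα, hβ⟩
    obtain ⟨z, hz, hθz⟩ := intermediate_value_Icc' hm0 hθcont.continuousOn hmem
    obtain ⟨-, -, hm⟩ := hinvm α hα
    exact le_trans hz.1 (hm z hz.2 hθz)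
  have hf_meas : Measurable f := by
    have hGp : Monotone (fun x => θinvp (θ (max x xp) - π)) := by
      intro x z hxz
      have h1 : θ (max x xp) ≤ θ (max z xp) :=
        θmonoI (mem_Ici.2 (le_trans hxp0 (le_max_right _ _)))
          (mem_Ici.2 (le_trans hxp0 (le_max_right _ _))) (max_le_max hxz (le_refl xp))
      have h2 : θ 0 + 2*π ≤ θ (max x xp) :=
        hθxp ▸ θmonoI (mem_Ici.2 hxp0) (mem_Ici.2 (le_trans hxp0 (le_max_right _ _)))
          (le_max_right _ _)
      exact hinvp_mono _ _ (by linarith [pi_pos]) (by linarith)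
    have hGm : Monotone (fun x => θinvm (θ (min x xm) - π)) := by
      intro x z hxz
      have h1 : θ (min z xm) ≤ θ (min x xm) :=
        θantiI (mem_Iic.2 (le_trans (min_le_right _ _) hxm0))
          (mem_Iic.2 (le_trans (min_le_right _ _) hxm0)) (min_le_min hxz (le_refl xm))
      have h2 : θ 0 + 2*π ≤ θ (min z xm) :=
        hθxm ▸ θantiI (mem_Iic.2 (le_trans (min_le_right _ _) hxm0)) (mem_Iic.2 hxm0)
          (min_le_right _ _)
      exact hinvm_anti _ _ (by linarith [pi_pos]) (by linarith)
    have hfeq : f = fun x => if xp ≤ x then (θ' (θinvp (θ (max x xp) - π)))^2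
        else if x ≤ xm then (θ' (θinvm (θ (min x xm) - π)))^2 else 0 := by
      funext x
      rcases le_or_gt xp x with h | h
      · rw [if_pos h, max_eq_left h, hf₁ x h]
      · rw [if_neg (not_le.2 h)]
        rcases le_or_gt x xm with h2 | h2
        · rw [if_pos h2, min_eq_left h2, hf₂ x h2]
        · rw [if_neg (not_le.2 h2), hf₃ x h2 h]
    rw [hfeq]
    apply Measurable.ite measurableSet_Ici
    · exact ((hθ'c.measurable.comp hGp.measurable).pow_const 2)
    · apply Measurable.ite measurableSet_Iic
      · exact ((hθ'c.measurable.comp hGm.measurable).pow_const 2)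
      · exact measurable_const
  -- the partial derivative in the first variable
  set d1 : ℝ × ℝ × ℝ → ℝ := fun p => fderiv ℝ u p (1, 0, 0) with hd1def
  have hderiv_at : ∀ (x : ℝ) (y : ℝ × ℝ), HasDerivAt (fun t => u (t, y)) (d1 (x, y)) x := by
    intro x y
    have hm : HasDerivAt (fun t : ℝ => (t, y)) ((1:ℝ), ((0:ℝ), (0:ℝ))) x :=
      HasDerivAt.prodMk (hasDerivAt_id x) (hasDerivAt_const x y)
    have hfd := ((hu.differentiable one_ne_zero) (x, y)).hasFDerivAt
    have := hfd.comp_hasDerivAt x hm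
    exact this
  have hd1cont : Continuous d1 := (hu.continuous_fderiv one_ne_zero).clm_apply continuous_const
  have hderiv_eq : ∀ (x : ℝ) (y : ℝ × ℝ), deriv (fun t => u (t, y)) x = d1 (x, y) :=
    fun x y => (hderiv_at x y).deriv
  -- integrability of the two integrands on ℝ³
  have hGcs : HasCompactSupport (fun p => (d1 p)^2) := by
    have h1 := husupp.fderiv ℝ
    have h2 := h1.comp_left (g := fun L : (ℝ × ℝ × ℝ) →L[ℝ] ℝ => (L (1, 0, 0))^2) (by simp)
    simpa [Function.comp_def, hd1def] using h2
  have hGi : Integrable (fun p => (d1 p)^2) := (hd1cont.pow 2).integrable_of_hasCompactSupport hGcs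
  have hFi : Integrable (fun p : ℝ × ℝ × ℝ => f p.1 * u p ^ 2) := by
    obtain ⟨Cb, hCb⟩ := husupp.exists_bound_of_continuousOn
      (((hθ'c.comp continuous_fst).pow 2).mul (hu.continuous.pow 2)).continuousOn
    apply Integrable.mono' (g := (tsupport u).indicator (fun _ => Cb))
    · rw [integrable_indicator_iff (isClosed_tsupport u).measurableSet]
      exact integrableOn_const husupp.measure_lt_top.ne
    · exact ((hf_meas.comp measurable_fst).mul
        ((hu.continuous.pow 2).measurable)).aestronglyMeasurable
    · apply Filter.Eventually.of_forall
      intro p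
      by_cases hp : p ∈ tsupport u
      · rw [indicator_of_mem hp]
        have h1 := hCb p hp
        have h2 : 0 ≤ f p.1 * u p ^ 2 := mul_nonneg (hf_nonneg _) (sq_nonneg _)
        have h3 : f p.1 * u p ^ 2 ≤ (θ' p.1)^2 * u p ^ 2 :=
          mul_le_mul_of_nonneg_right (hf_both p.1).2 (sq_nonneg _)
        have h4 : (θ' p.1)^2 * u p ^ 2 ≤ Cb := by
          have := le_trans (le_abs_self _) h1
          simpa using this
        rw [Real.norm_eq_abs, abs_of_nonneg h2]
        linarith
      · rw [indicator_of_notMem hp, image_eq_zero_of_notMem_tsupport hp]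
        simp
  have hd2slicei : ∀ y : ℝ × ℝ, Integrable (fun x => (d1 (x, y))^2) := by
    intro y
    apply (hd1cont.comp (continuous_id.prodMk continuous_const)).pow 2
      |>.integrable_of_hasCompactSupport
    apply HasCompactSupport.intro (husupp.image continuous_fst)
    intro x hx
    have : (x, y) ∉ tsupport u := fun hmem => hx ⟨(x, y), hmem, rfl⟩
    have hzero : fderiv ℝ u (x, y) = 0 := by
      apply image_eq_zero_of_notMem_tsupport
      intro hmem
      exact this ((closure_minimal (support_fderiv_subset ℝ) (isClosed_tsupport u)) hmem)
    simp [hd1def, hzero]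
  -- the slice inequality for a.e. y
  have hslice : ∀ y : ℝ × ℝ, Integrable (fun x => f x * u (x, y) ^ 2) →
      ∫ x, f x * u (x, y) ^ 2 ≤ ∫ x, (deriv (fun t => u (t, y)) x)^2 := by
    intro y hyint
    set gy : ℝ → ℝ := fun t => u (t, y) with hgydef
    have hgyd : Differentiable ℝ gy := fun x => (hderiv_at x y).differentiableAt
    have hgyderiv : deriv gy = fun x => d1 (x, y) := funext fun x => (hderiv_at x y).deriv
    have hgy' : Continuous (deriv gy) := by
      rw [hgyderiv]; exact hd1cont.comp (continuous_id.prodMk continuous_const)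
    have hgycs : HasCompactSupport gy :=
      HasCompactSupport.intro (husupp.image continuous_fst)
        (fun t ht => (image_eq_zero_of_notMem_tsupport (f := u)
          (fun hmem => ht ⟨(t, y), hmem, rfl⟩) : u (t, y) = 0))
    have hd2i1 : Integrable (fun x => (deriv gy x)^2) := by
      rw [hgyderiv]; exact hd2slicei y
    -- the open slice set
    set Sy : Set ℝ := {t | rot (θ t) y ∈ ω} with hSydef
    have hSyopen : IsOpen Sy := by
      apply hω_open.preimage (f := fun t => rot (θ t) y)
      apply Continuous.prodMk
      · exact ((continuous_fst.comp continuous_const).mul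
          ((Real.continuous_cos.comp hθcont))).sub
          ((continuous_snd.comp continuous_const).mul ((Real.continuous_sin.comp hθcont)))
      · exact ((continuous_fst.comp continuous_const).mul
          ((Real.continuous_sin.comp hθcont))).add
          ((continuous_snd.comp continuous_const).mul ((Real.continuous_cos.comp hθcont)))
    have hgyS : ∀ t, t ∉ Sy → gy t = 0 := by
      intro t ht
      show u (t, y) = 0
      apply image_eq_zero_of_notMem_tsupport (f := u)
      intro hmem
      exact ht (hΩsub (huΩ hmem))
    have hπSy : ∀ t ∈ Sy, ∀ s, θ s = θ t + π → s ∉ Sy :=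
      fun t ht s hts hs => hπkey y t s ht hts hs
    have hf0r : ∀ x, 0 ≤ x → x < xp → f x = 0 :=
      fun x hx hlt => hf₃ x (lt_of_lt_of_le hxmneg hx) hlt
    -- right half line
    have hR := halfline θ θ' hθ hθ'c hmono hpos θinvp hinvp f hf_nonneg hf₁ hf0r
      Sy hSyopen hπSy gy hgyd hgy' hgycs hgyS hyint
    -- reflected data for the left half line
    set θn : ℝ → ℝ := fun x => θ (-x) with hθndef
    set θn' : ℝ → ℝ := fun x => -θ' (-x) with hθn'def
    have hθn : ∀ x, HasDerivAt θn (θn' x) x := by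
      intro x
      have h := (hθ (-x)).comp x (hasDerivAt_neg x)
      simpa [hθndef, hθn'def, mul_comm, Function.comp_def] using h
    have hθn'c : Continuous θn' := (hθ'c.comp continuous_neg).neg
    have hmonon : Monotone θn' := by
      intro x z hxz
      simp only [hθn'def, neg_le_neg_iff]
      exact hmono (by linarith)
    have hposn : ∀ x, 0 ≤ x → 0 ≤ θn' x := by
      intro x hx
      have := hneg (-x) (by linarith)
      simp only [hθn'def]
      linarith
    set θinvpn : ℝ → ℝ := fun α => -θinvm α with hinvpndef
    have hθn0 : θn 0 = θ 0 := by simp [hθndef]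
    have hinvpn : ∀ α, θn 0 ≤ α →
        0 ≤ θinvpn α ∧ θn (θinvpn α) = α ∧ ∀ z, 0 ≤ z → θn z = α → θinvpn α ≤ z := by
      intro α hα
      rw [hθn0] at hα
      obtain ⟨h1, h2, h3⟩ := hinvm α hα
      refine ⟨by simp [hinvpndef]; linarith, by simpa [hθndef, hinvpndef] using h2, ?_⟩
      intro z hz hθz
      have := h3 (-z) (by linarith) (by simpa [hθndef] using hθz)
      simp only [hinvpndef]
      linarith
    set fn : ℝ → ℝ := fun x => f (-x) with hfndef
    have hfnn : ∀ x, 0 ≤ fn x := fun x => hf_nonneg _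
    have hxpn : θinvpn (θn 0 + 2*π) = -xm := by rw [hθn0]
    have hfrn : ∀ x, θinvpn (θn 0 + 2*π) ≤ x → fn x = (θn' (θinvpn (θn x - π)))^2 := by
      intro x hx
      rw [hxpn] at hx
      have h2 := hf₂ (-x) (by linarith)
      simp only [hfndef, hθn'def, hθndef, hinvpndef, neg_neg]
      rw [h2, neg_pow]
      simp [neg_neg]
    have hf0n : ∀ x, 0 ≤ x → x < θinvpn (θn 0 + 2*π) → fn x = 0 := by
      intro x hx hlt
      rw [hxpn] at hlt
      exact hf₃ (-x) (by linarith) (by linarith)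
    set Sn : Set ℝ := {t | -t ∈ Sy} with hSndef
    have hSnopen : IsOpen Sn := hSyopen.preimage continuous_neg
    have hπSn : ∀ t ∈ Sn, ∀ s, θn s = θn t + π → s ∉ Sn := by
      intro t ht s hts hs
      exact hπkey y (-t) (-s) ht hts hs
    set gn : ℝ → ℝ := fun t => gy (-t) with hgndef
    have hgnd : Differentiable ℝ gn := hgyd.comp differentiable_neg
    have hdgn : ∀ t, HasDerivAt gn (-(deriv gy (-t))) t := by
      intro t
      have h := ((hgyd (-t)).hasDerivAt).comp t (hasDerivAt_neg t)
      simpa [hgndef, mul_comm, Function.comp_def] using h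
    have hgnderiv : deriv gn = fun t => -(deriv gy (-t)) := funext fun t => (hdgn t).deriv
    have hgn' : Continuous (deriv gn) := by
      rw [hgnderiv]; exact (hgy'.comp continuous_neg).neg
    have hgncs : HasCompactSupport gn := hgycs.comp_homeomorph (Homeomorph.neg ℝ)
    have hgnS : ∀ t, t ∉ Sn → gn t = 0 := fun t ht => hgyS (-t) ht
    have hfgin : Integrable (fun t => fn t * gn t ^ 2) := by
      have := hyint.comp_neg
      simpa [hfndef, hgndef, hgydef] using this
    have hL := halfline θn θn' hθn hθn'c hmonon hposn θinvpn hinvpn fn hfnn hfrn hf0n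
      Sn hSnopen hπSn gn hgnd hgn' hgncs hgnS hfgin
    -- transform the reflected inequality
    have hLHSn : ∫ t in Ici (0:ℝ), fn t * gn t ^ 2 = ∫ t in Iic (0:ℝ), f t * gy t ^ 2 := by
      rw [integral_Ici_eq_integral_Ioi]
      have h := integral_comp_neg_Ioi (0:ℝ) (fun s => f s * gy s ^ 2)
      rw [neg_zero] at h
      exact h
    have hRHSn : ∫ t in Ioi (0:ℝ), (deriv gn t)^2 = ∫ t in Iic (0:ℝ), (deriv gy t)^2 := by
      have h1 : (fun t => (deriv gn t)^2) = fun t => (fun s => (deriv gy s)^2) (-t) := by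
        funext t
        rw [hgnderiv]
        ring
      rw [h1]
      have h := integral_comp_neg_Ioi (0:ℝ) (fun s => (deriv gy s)^2)
      rw [neg_zero] at h
      exact h
    rw [hLHSn, hRHSn] at hL
    rw [integral_Ici_eq_integral_Ioi] at hR
    -- combine the two halves
    have hsplit1 : ∫ x, f x * gy x ^ 2 =
        (∫ x in Iic (0:ℝ), f x * gy x ^ 2) + ∫ x in Ioi (0:ℝ), f x * gy x ^ 2 :=
      (intervalIntegral.integral_Iic_add_Ioi hyint.integrableOn hyint.integrableOn).symm
    have hsplit2 : ∫ x, (deriv gy x)^2 =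
        (∫ x in Iic (0:ℝ), (deriv gy x)^2) + ∫ x in Ioi (0:ℝ), (deriv gy x)^2 :=
      (intervalIntegral.integral_Iic_add_Ioi hd2i1.integrableOn hd2i1.integrableOn).symm
    calc ∫ x, f x * u (x, y) ^ 2 = ∫ x, f x * gy x ^ 2 := rfl
      _ = (∫ x in Iic (0:ℝ), f x * gy x ^ 2) + ∫ x in Ioi (0:ℝ), f x * gy x ^ 2 := hsplit1
      _ ≤ (∫ x in Iic (0:ℝ), (deriv gy x)^2) + ∫ x in Ioi (0:ℝ), (deriv gy x)^2 :=
          add_le_add hL hR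
      _ = ∫ x, (deriv gy x)^2 := hsplit2.symm
      _ = ∫ x, (deriv (fun t => u (t, y)) x)^2 := rfl
  -- Fubini and conclusion
  have hGoalG : (fun p : ℝ × ℝ × ℝ => (deriv (fun t => u (t, p.2)) p.1)^2) =
      fun p : ℝ × ℝ × ℝ => (d1 p)^2 := by
    funext p
    rw [hderiv_eq p.1 p.2]
  rw [hGoalG]
  have hvol : (volume : Measure (ℝ × ℝ × ℝ)) =
      (volume : Measure ℝ).prod (volume : Measure (ℝ × ℝ)) := Measure.volume_eq_prod ℝ (ℝ × ℝ)
  rw [hvol] at hFi hGi ⊢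
  rw [integral_prod_symm _ hFi, integral_prod_symm _ hGi]
  apply integral_mono_ae hFi.integral_prod_right hGi.integral_prod_right
  filter_upwards [hFi.prod_left_ae] with y hy
  have h := hslice y hy
  calc ∫ x, f x * u (x, y) ^ 2 ≤ ∫ x, (deriv (fun t => u (t, y)) x)^2 := h
    _ = ∫ x, (d1 (x, y))^2 := by
        congr 1
        funext x
        rw [hderiv_eq x y]
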